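/- For every metrizable continuum K with more than one point there exists a compact metrizable space X such that: X has no isolated points; the union of the degenerate (singleton) connected components of X is dense in X; X has countably infinitely many nondegenerate connected components, each homeomorphic to K; and the nondegenerate components of X form a null sequence, i.e., for every ε > 0 (with respect to a fixed compatible metric) only finitely many components of X have diameter at least ε. In other words, X is a tame cantoroid all of whose nondegenerate components are copies of K. -/

import Mathlib

open TopologicalSpace Set Metric ENNReal

noncomputable section Stmt10Aux

set_option linter.unusedSectionVars false
set_option synthInstance.maxHeartbeats 1000000
set_option maxHeartbeats 1000000

namespace Stmt10

abbrev Linf : Type := lp (fun _ : ℕ => ℝ) ∞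

instance : T2Space Linf := inferInstance

/-! ### the sequence 1/(m+1) and the convergent set AA -/

def aa (m : ℕ) : ℝ := 1 / ((m : ℝ) + 1)

lemma aa_pos (m : ℕ) : 0 < aa m := by unfold aa; positivity

lemma aa_ne (m : ℕ) : aa m ≠ 0 := (aa_pos m).ne'

lemma aa_le_one (m : ℕ) : aa m ≤ 1 := by
  rw [aa, div_le_one (by positivity)]; linarith [Nat.cast_nonneg (α := ℝ) m]

lemma aa_lt_aa {m n : ℕ} (h : m < n) : aa n < aa m := by
  rw [aa, aa, div_lt_div_iff₀ (by positivity) (by positivity)]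
  have : (m : ℝ) < n := by exact_mod_cast h
  nlinarith

lemma aa_le_aa {m n : ℕ} (h : m ≤ n) : aa n ≤ aa m := by
  rcases h.lt_or_eq with h | rfl
  · exact (aa_lt_aa h).le
  · exact le_rfl

lemma aa_inj : Function.Injective aa := by
  intro m n h
  rcases lt_trichotomy m n with hl | he | hl
  · exact absurd h (aa_lt_aa hl).ne'
  · exact he
  · exact absurd h (aa_lt_aa hl).ne

lemma exists_aa_lt {x : ℝ} (hx : 0 < x) : ∃ N, aa N < x := by
  obtain ⟨n, hn⟩ := exists_nat_one_div_lt hx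
  exact ⟨n, hn⟩

def AA : Set ℝ := {0} ∪ range aa

lemma zero_mem_AA : (0 : ℝ) ∈ AA := Or.inl rfl

lemma aa_mem_AA (m : ℕ) : aa m ∈ AA := Or.inr ⟨m, rfl⟩

lemma AA_nonneg {x : ℝ} (hx : x ∈ AA) : 0 ≤ x := by
  rcases hx with h | ⟨m, rfl⟩
  · simp at h; simp [h]
  · exact (aa_pos m).le

lemma AA_subset_Icc : AA ⊆ Icc (0:ℝ) 1 := by
  rintro x (h | ⟨m, rfl⟩)
  · simp at h; simp [h]
  · exact ⟨(aa_pos m).le, aa_le_one m⟩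

lemma isClosed_AA : IsClosed AA := by
  have h : AA = ⋂ N : ℕ, (Icc (0:ℝ) (aa N) ∪ ⋃ n ∈ Finset.range N, {aa n}) := by
    apply Subset.antisymm
    · intro x hx
      refine mem_iInter.2 fun N => ?_
      rcases hx with h | ⟨m, rfl⟩
      · simp at h; exact Or.inl ⟨le_of_eq h.symm, by rw [h]; exact (aa_pos N).le⟩
      · rcases lt_or_ge m N with hm | hm
        · exact Or.inr (mem_biUnion (Finset.mem_range.2 hm) rfl)
        · exact Or.inl ⟨(aa_pos m).le, aa_le_aa hm⟩
    · intro x hx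
      simp only [mem_iInter] at hx
      rcases le_or_gt x 0 with h0 | h0
      · have := (hx 0).resolve_right (by
          simp only [mem_iUnion]
          rintro ⟨n, hn, _⟩
          simp at hn)
        have : x = 0 := le_antisymm h0 this.1
        exact this ▸ zero_mem_AA
      · obtain ⟨N, hN⟩ := exists_aa_lt h0
        rcases hx N with h | h
        · exact absurd h.2 (not_le.2 hN)
        · simp only [mem_iUnion, mem_singleton_iff] at h
          obtain ⟨n, _, rfl⟩ := h
          exact aa_mem_AA n
  rw [h]
  exact isClosed_iInter fun N =>
    (isClosed_Icc.union ((finite_mem_finset (Finset.range N)).isClosed_biUnion fun n _ => isClosed_singleton))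

lemma isCompact_AA : IsCompact AA :=
  isCompact_Icc.of_isClosed_subset isClosed_AA AA_subset_Icc

/-- `AA` is totally disconnected (gap argument). -/
lemma AA_subsingleton {s : Set ℝ} (hs : s ⊆ AA) (hc : IsPreconnected s) : s.Subsingleton := by
  intro x hx y hy
  by_contra hxy
  -- wlog x < y
  wlog hlt : x < y generalizing x y
  · exact this hy hx (Ne.symm hxy) ((Ne.lt_or_gt hxy).resolve_left hlt)
  -- y = aa n for some n
  have hy' : y ∈ AA := hs hy
  have hx0 : 0 ≤ x := AA_nonneg (hs hx)
  have hy0 : 0 < y := lt_of_le_of_lt hx0 hlt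
  obtain ⟨n, rfl⟩ : ∃ n, aa n = y := by
    rcases hy' with h | h
    · exact absurd (mem_singleton_iff.1 h) hy0.ne'
    · exact h
  set M := max x (aa (n + 1)) with hM
  have hMy : M < aa n := max_lt hlt (aa_lt_aa (Nat.lt_succ_self n))
  set z := (M + aa n) / 2 with hz
  have hz1 : M < z := by rw [hz]; linarith
  have hz2 : z < aa n := by rw [hz]; linarith
  have hzx : x ≤ z := le_trans (le_max_left _ _) hz1.le
  have hzA : z ∉ AA := by
    rintro (h | ⟨j, hj⟩)
    · simp at h
      have : 0 < z := lt_of_lt_of_le (lt_of_lt_of_le (aa_pos (n+1)) (le_max_right _ _)) hz1.le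
      exact this.ne' h
    · have hj1 : aa (n+1) < aa j := lt_of_le_of_lt (le_max_right x _) (hj ▸ hz1)
      have hj2 : j < n + 1 := by
        by_contra hcon
        exact absurd hj1 (not_lt.2 (aa_le_aa (not_lt.1 hcon)))
      have hj3 : aa n ≤ aa j := aa_le_aa (Nat.lt_succ_iff.1 hj2)
      rw [hj] at hj3
      exact absurd hj3 (not_le.2 hz2)
  exact hzA (hs (hc.Icc_subset hx hy ⟨hzx, hz2.le⟩))


/-! ### the Cantor embedding into ℓ∞ -/

def eefun (c : ℕ → Bool) : ℕ → ℝ := fun n => (if c n then (1:ℝ) else 0) * (1/2)^n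

lemma eefun_bound (c : ℕ → Bool) (n : ℕ) : ‖eefun c n‖ ≤ (1/2)^n := by
  rw [eefun, Real.norm_eq_abs, abs_mul]
  have h1 : |(if c n then (1:ℝ) else 0)| ≤ 1 := by
    rcases Bool.dichotomy (c n) with h | h <;> simp [h]
  have h2 : |((1:ℝ)/2)^n| = (1/2)^n := by
    rw [abs_pow]; congr 1; exact abs_of_nonneg (by norm_num)
  rw [h2]
  nlinarith [abs_nonneg (if c n then (1:ℝ) else 0), pow_pos (by norm_num : (0:ℝ) < 1/2) n]

def ee (c : ℕ → Bool) : Linf :=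
  ⟨eefun c, memℓp_infty ⟨1, by
    rintro x ⟨n, rfl⟩
    exact le_trans (eefun_bound c n) (pow_le_one₀ (by norm_num) (by norm_num))⟩⟩

lemma ee_apply (c : ℕ → Bool) (n : ℕ) : (ee c : ℕ → ℝ) n = (if c n then (1:ℝ) else 0) * (1/2)^n := rfl

lemma ee_norm_le_one (c : ℕ → Bool) : ‖ee c‖ ≤ 1 :=
  lp.norm_le_of_forall_le zero_le_one fun n =>
    le_trans (eefun_bound c n) (pow_le_one₀ (by norm_num) (by norm_num))

lemma ee_sub_bound {c c' : ℕ → Bool} {N : ℕ} (h : ∀ i < N, c i = c' i) :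
    ‖ee c - ee c'‖ ≤ (1/2)^N := by
  apply lp.norm_le_of_forall_le (by positivity)
  intro i
  have happ : ((ee c - ee c' : Linf) : ℕ → ℝ) i = eefun c i - eefun c' i := by
    exact congrFun (lp.coeFn_sub (ee c) (ee c')) i
  rw [happ]
  rcases lt_or_ge i N with hi | hi
  · rw [eefun, eefun, h i hi, sub_self, norm_zero]; positivity
  · have h1 : 0 ≤ eefun c i := by
      rw [eefun]; rcases Bool.dichotomy (c i) with h | h <;> { simp [h]; try positivity }
    have h2 : 0 ≤ eefun c' i := by
      rw [eefun]; rcases Bool.dichotomy (c' i) with h | h <;> { simp [h]; try positivity }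
    have h3 := eefun_bound c i
    have h4 := eefun_bound c' i
    rw [Real.norm_eq_abs] at h3 h4 ⊢
    rw [abs_of_nonneg h1] at h3
    rw [abs_of_nonneg h2] at h4
    calc |eefun c i - eefun c' i| ≤ (1/2)^i := by
          rw [abs_sub_le_iff]; constructor <;> nlinarith
      _ ≤ (1/2)^N := pow_le_pow_of_le_one (by norm_num) (by norm_num) hi
  
lemma ee_coord_ne {c c' : ℕ → Bool} {n : ℕ} (h : c n ≠ c' n) :
    (ee c : ℕ → ℝ) n ≠ (ee c' : ℕ → ℝ) n := by
  rw [ee_apply, ee_apply]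
  rcases Bool.dichotomy (c n) with h1 | h1 <;> rcases Bool.dichotomy (c' n) with h2 | h2 <;>
    simp [h1, h2] at h ⊢ <;> positivity

lemma ee_injective : Function.Injective ee := by
  intro c c' h
  funext n
  by_contra hn
  exact ee_coord_ne hn (by rw [h])

lemma continuous_ee : Continuous ee := by
  rw [continuous_iff_continuousAt]
  intro c
  rw [ContinuousAt, Metric.tendsto_nhds]
  intro ε hε
  obtain ⟨N, hN⟩ : ∃ N : ℕ, ((1:ℝ)/2)^N < ε := exists_pow_lt_of_lt_one hε (by norm_num)
  have hV : {c' : ℕ → Bool | ∀ i < N, c' i = c i} ∈ nhds c := by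
    have : {c' : ℕ → Bool | ∀ i < N, c' i = c i} = ⋂ i ∈ Finset.range N, (fun c' : ℕ → Bool => c' i) ⁻¹' {c i} := by
      ext c'; simp [Finset.mem_range]
    rw [this]
    apply Filter.biInter_finset_mem (Finset.range N) |>.2
    intro i _
    exact IsOpen.mem_nhds ((isOpen_discrete _).preimage (continuous_apply i)) rfl
  filter_upwards [hV] with c' hc'
  rw [dist_eq_norm]
  exact lt_of_le_of_lt (ee_sub_bound hc') hN

lemma ee_isEmbedding : Topology.IsEmbedding ee :=
  (continuous_ee.isClosedEmbedding ee_injective).toIsEmbedding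

lemma ee_range_td : IsTotallyDisconnected (range ee) :=
  ee_isEmbedding.isTotallyDisconnected_range.2 inferInstance

lemma ee_flip_ne (c : ℕ → Bool) (N : ℕ) : ee (Function.update c N (!c N)) ≠ ee c := by
  intro h
  have := ee_coord_ne (c := Function.update c N (!c N)) (c' := c) (n := N)
    (by simp [Function.update_self])
  exact this (by rw [h])

lemma ee_flip_bound (c : ℕ → Bool) (N : ℕ) :
    ‖ee (Function.update c N (!c N)) - ee c‖ ≤ (1/2)^N :=
  ee_sub_bound fun i hi => Function.update_of_ne (by omega) _ _


variable (K : Type) [MetricSpace K] [CompactSpace K] [ConnectedSpace K] [Nontrivial K]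

def kap : K → Linf := kuratowskiEmbedding K

lemma kap_isometry : Isometry (kap K) := kuratowskiEmbedding.isometry K

lemma kap_continuous : Continuous (kap K) := (kap_isometry K).continuous

lemma kap_injective : Function.Injective (kap K) := (kap_isometry K).injective

def KK : Set Linf := range (kap K)

lemma isCompact_KK : IsCompact (KK K) := isCompact_range (kap_continuous K)

lemma isConnected_KK : IsConnected (KK K) := isConnected_range (kap_continuous K)

def kk (n : ℕ) : Linf := kap K (denseSeq K n.unpair.2)

lemma kk_mem (n : ℕ) : kk K n ∈ KK K := ⟨_, rfl⟩

/-- every point of `KK` is approximated by `kk n` with arbitrarily large `n` -/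
lemma kk_approx (y : K) {δ : ℝ} (hδ : 0 < δ) (N : ℕ) :
    ∃ n, N ≤ n ∧ dist (kk K n) (kap K y) < δ := by
  obtain ⟨j, hj⟩ := Metric.denseRange_iff.1 (denseRange_denseSeq K) y δ hδ
  refine ⟨Nat.pair N j, Nat.left_le_pair N j, ?_⟩
  rw [kk, Nat.unpair_pair, (kap_isometry K).dist_eq, dist_comm]
  exact hj

/-- compact parameter set in `ℝ × ℓ∞` : the graph `{(0, h) : h ∈ KK} ∪ {(aa n, kk n)}` -/
def TT : Set (ℝ × Linf) := ({0} ×ˢ KK K) ∪ ⋃ n, {aa n} ×ˢ ({kk K n} : Set Linf)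

lemma TT_subset : TT K ⊆ AA ×ˢ KK K := by
  rintro ⟨t, h⟩ (⟨ht, hh⟩ | hmem)
  · exact ⟨Or.inl ht, hh⟩
  · simp only [mem_iUnion, mem_prod, mem_singleton_iff] at hmem
    obtain ⟨n, rfl, rfl⟩ := hmem
    exact ⟨Or.inr ⟨n, rfl⟩, kk_mem K n⟩

set_option maxHeartbeats 1000000 in
lemma isClosed_TT : IsClosed (TT K) := by
  have hKcl : IsClosed (KK K) := (isCompact_KK K).isClosed
  have heq : TT K = (AA ×ˢ KK K) ∩
      ⋂ N : ℕ, ((Iic (aa N) ×ˢ KK K) ∪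
        ⋃ n ∈ Finset.range N, {aa n} ×ˢ ({kk K n} : Set Linf)) := by
    apply Subset.antisymm
    · intro p hp
      refine ⟨TT_subset K hp, mem_iInter.2 fun N => ?_⟩
      rcases hp with ⟨ht, hh⟩ | hmem
      · simp only [mem_singleton_iff] at ht
        exact Or.inl ⟨by rw [mem_Iic, ht]; exact (aa_pos N).le, hh⟩
      · simp only [mem_iUnion, mem_prod, mem_singleton_iff] at hmem
        obtain ⟨n, hn1, hn2⟩ := hmem
        rcases lt_or_ge n N with h | h
        · exact Or.inr (mem_biUnion (Finset.mem_range.2 h) ⟨hn1, hn2⟩)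
        · exact Or.inl ⟨by rw [mem_Iic, hn1]; exact aa_le_aa h, by rw [hn2]; exact kk_mem K n⟩
    · rintro ⟨t, h⟩ ⟨⟨htA, hhK⟩, hG⟩
      simp only [mem_iInter] at hG
      rcases htA with ht | ⟨m, rfl⟩
      · exact Or.inl ⟨ht, hhK⟩
      · rcases hG (m+1) with ⟨hle, -⟩ | hmem
        · exact absurd (mem_Iic.1 hle) (not_le.2 (aa_lt_aa (Nat.lt_succ_self m)))
        · simp only [mem_iUnion, Finset.mem_range, mem_prod, mem_singleton_iff] at hmem
          obtain ⟨n, -, hn1, hn2⟩ := hmem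
          have : n = m := aa_inj hn1.symm
          subst this
          exact Or.inr (mem_iUnion.2 ⟨n, rfl, hn2⟩)
  rw [heq]
  refine (isClosed_AA.prod hKcl).inter (isClosed_iInter fun N => ?_)
  exact (isClosed_Iic.prod hKcl).union
    ((finite_mem_finset (Finset.range N)).isClosed_biUnion fun n _ => isClosed_singleton.prod isClosed_singleton)


lemma isCompact_TT : IsCompact (TT K) :=
  (isCompact_AA.prod (isCompact_KK K)).of_isClosed_subset (isClosed_TT K) (TT_subset K)

abbrev EE : Type := ℝ × ℝ × Linf × Linf

def FF : ℝ × (ℝ × Linf) × (ℕ → Bool) → EE := fun p =>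
  (p.1, p.1 * p.2.1.1, (p.1 * p.2.1.1) • ee p.2.2, p.1 • p.2.1.2)

lemma continuous_FF : Continuous FF := by
  refine continuous_fst.prodMk (.prodMk ?_ (.prodMk ?_ ?_))
  · exact continuous_fst.mul (continuous_snd.fst.fst)
  · exact (continuous_fst.mul (continuous_snd.fst.fst)).smul (continuous_ee.comp continuous_snd.snd)
  · exact continuous_fst.smul continuous_snd.fst.snd

def SS : Set EE := FF '' (AA ×ˢ (TT K ×ˢ (univ : Set (ℕ → Bool))))

lemma isCompact_SS : IsCompact (SS K) :=
  ((isCompact_AA.prod ((isCompact_TT K).prod (isCompact_univ))).image continuous_FF)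

def orig : EE := (0, 0, 0, 0)
def pt1 (m : ℕ) (h : Linf) : EE := (aa m, 0, 0, aa m • h)
def pt2 (m n : ℕ) (c : ℕ → Bool) : EE :=
  (aa m, aa m * aa n, (aa m * aa n) • ee c, aa m • kk K n)

@[simp] lemma orig_fst : (orig : EE).1 = 0 := rfl
@[simp] lemma orig_snd : (orig : EE).2.1 = 0 := rfl
@[simp] lemma pt1_fst (m : ℕ) (h : Linf) : (pt1 m h).1 = aa m := rfl
@[simp] lemma pt1_snd (m : ℕ) (h : Linf) : (pt1 m h).2.1 = 0 := rfl
@[simp] lemma pt2_fst (m n : ℕ) (c : ℕ → Bool) : (pt2 K m n c).1 = aa m := rfl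
@[simp] lemma pt2_snd (m n : ℕ) (c : ℕ → Bool) : (pt2 K m n c).2.1 = aa m * aa n := rfl

lemma mem_SS {p : EE} : p ∈ SS K ↔
    p = orig ∨ (∃ m h, h ∈ KK K ∧ p = pt1 m h) ∨ (∃ m n c, p = pt2 K m n c) := by
  constructor
  · rintro ⟨⟨s, ⟨t, h⟩, c⟩, ⟨hs, hth, -⟩, rfl⟩
    rcases hs with hs | ⟨m, rfl⟩
    · left
      simp only [mem_singleton_iff] at hs
      subst hs
      simp [FF, orig]
    · rcases hth with ⟨ht, hh⟩ | hmem
      · simp only [mem_singleton_iff] at ht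
        subst ht
        right; left
        exact ⟨m, h, hh, by simp [FF, pt1]⟩
      · simp only [mem_iUnion, mem_prod, mem_singleton_iff] at hmem
        obtain ⟨n, rfl, rfl⟩ := hmem
        right; right
        exact ⟨m, n, c, by simp [FF, pt2]⟩
  · rintro (rfl | ⟨m, h, hh, rfl⟩ | ⟨m, n, c, rfl⟩)
    · exact ⟨(0, (0, kap K (Classical.arbitrary K)), fun _ => false),
        ⟨Or.inl rfl, Or.inl ⟨rfl, ⟨_, rfl⟩⟩, trivial⟩, by simp [FF, orig]⟩
    · exact ⟨(aa m, (0, h), fun _ => false),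
        ⟨Or.inr ⟨m, rfl⟩, Or.inl ⟨rfl, hh⟩, trivial⟩, by simp [FF, pt1]⟩
    · exact ⟨(aa m, (aa n, kk K n), c),
        ⟨Or.inr ⟨m, rfl⟩, Or.inr (mem_iUnion.2 ⟨n, rfl, rfl⟩), trivial⟩, by simp [FF, pt2]⟩


/-! ### Part 4: the space X and its components -/

abbrev XX : Type := ↥(SS K)

lemma smul_cancel {r : ℝ} (hr : r ≠ 0) {x y : Linf} (h : r • x = r • y) : x = y := by
  have := congrArg (fun z => r⁻¹ • z) h
  simpa [smul_smul, inv_mul_cancel₀ hr] using this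

lemma aa_mul_cancel (m : ℕ) : aa m * ((m:ℝ) + 1) = 1 := by
  rw [aa]; field_simp

lemma sval_mem_AA (x : XX K) : (x : EE).1 ∈ AA := by
  rcases (mem_SS K).1 x.2 with h | ⟨m, h, hh, hp⟩ | ⟨m, n, c, hp⟩
  · rw [h]; exact zero_mem_AA
  · rw [hp]; exact aa_mem_AA m
  · rw [hp]; exact aa_mem_AA m

def CC (m : ℕ) : Set (XX K) := {x | ∃ h ∈ KK K, (x : EE) = pt1 m h}

def phi (m : ℕ) (y : K) : XX K :=
  ⟨pt1 m (kap K y), (mem_SS K).2 (Or.inr (Or.inl ⟨m, kap K y, ⟨y, rfl⟩, rfl⟩))⟩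

lemma phi_continuous (m : ℕ) : Continuous (phi K m) := by
  apply Continuous.subtype_mk
  unfold pt1
  exact (continuous_const : Continuous fun _ : K => aa m).prodMk
    ((continuous_const).prodMk ((continuous_const).prodMk
      ((continuous_const : Continuous fun _ : K => aa m).smul (kap_continuous K))))

lemma range_phi (m : ℕ) : range (phi K m) = CC K m := by
  ext x
  constructor
  · rintro ⟨y, rfl⟩
    exact ⟨kap K y, ⟨y, rfl⟩, rfl⟩
  · rintro ⟨h, ⟨y, rfl⟩, hx⟩
    exact ⟨y, Subtype.ext hx.symm⟩

lemma isConnected_CC (m : ℕ) : IsConnected (CC K m) := by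
  rw [← range_phi]
  exact isConnected_range (phi_continuous K m)

lemma pt1_mem_CC {m : ℕ} {h : Linf} (hh : h ∈ KK K) (x : XX K) (hx : (x : EE) = pt1 m h) :
    x ∈ CC K m := ⟨h, hh, hx⟩

lemma not_mem_CC_of_snd_ne {x : XX K} (hx : (x : EE).2.1 ≠ 0) (m : ℕ) : x ∉ CC K m := by
  rintro ⟨h, -, hp⟩
  rw [hp] at hx
  exact hx rfl

lemma orig_not_mem_CC (x : XX K) (hx : (x : EE) = orig) (m : ℕ) : x ∉ CC K m := by
  rintro ⟨h, -, hp⟩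
  rw [hx] at hp
  have : (0:ℝ) = aa m := congrArg Prod.fst hp
  exact (aa_pos m).ne this

/-- first coordinate is constant on connected components -/
lemma comp_fst_const (x : XX K) :
    ∀ y ∈ connectedComponent x, (y : EE).1 = (x : EE).1 := by
  intro y hy
  have hcont : Continuous (fun z : XX K => (z : EE).1) := continuous_subtype_val.fst
  have himg : IsPreconnected ((fun z : XX K => (z : EE).1) '' connectedComponent x) :=
    isPreconnected_connectedComponent.image _ hcont.continuousOn
  have hsub : ((fun z : XX K => (z : EE).1) '' connectedComponent x) ⊆ AA := by
    rintro - ⟨z, -, rfl⟩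
    exact sval_mem_AA K z
  exact AA_subsingleton hsub himg (mem_image_of_mem _ hy)
    (mem_image_of_mem _ mem_connectedComponent)

/-- second coordinate is constant on connected components (when first coord is `aa m`) -/
lemma comp_snd_const (x : XX K) (m : ℕ) (hx : (x : EE).1 = aa m) :
    ∀ y ∈ connectedComponent x, (y : EE).2.1 = (x : EE).2.1 := by
  intro y hy
  have hcont : Continuous (fun z : XX K => (z : EE).2.1 * ((m:ℝ) + 1)) :=
    (continuous_subtype_val.snd.fst).mul continuous_const
  have himg : IsPreconnected ((fun z : XX K => (z : EE).2.1 * ((m:ℝ)+1)) '' connectedComponent x) :=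
    isPreconnected_connectedComponent.image _ hcont.continuousOn
  have hAA : ∀ z ∈ connectedComponent x, (z : EE).2.1 * ((m:ℝ)+1) ∈ AA := by
    intro z hz
    have hz1 : (z : EE).1 = aa m := by rw [comp_fst_const K x z hz, hx]
    rcases (mem_SS K).1 z.2 with h | ⟨m', h, hh, hp⟩ | ⟨m', n, c, hp⟩
    · rw [h, orig_fst] at hz1
      exact absurd hz1.symm (aa_pos m).ne'
    · rw [hp, pt1_snd]
      simpa using zero_mem_AA
    · rw [hp, pt2_fst] at hz1
      rw [hp, pt2_snd]
      have hm : m' = m := aa_inj hz1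
      subst hm
      have : aa m' * aa n * ((m':ℝ)+1) = aa n := by
        rw [mul_comm (aa m') (aa n), mul_assoc, aa_mul_cancel, mul_one]
      simp only [this]
      exact aa_mem_AA n
  have hsub : ((fun z : XX K => (z : EE).2.1 * ((m:ℝ)+1)) '' connectedComponent x) ⊆ AA := by
    rintro - ⟨z, hz, rfl⟩
    exact hAA z hz
  have := AA_subsingleton hsub himg (mem_image_of_mem _ hy)
    (mem_image_of_mem _ mem_connectedComponent)
  have hm1 : ((m:ℝ) + 1) ≠ 0 := by positivity
  exact mul_right_cancel₀ hm1 this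

/-- classification of connected components of `X` -/
lemma comp_class (x : XX K) :
    (connectedComponent x = {x} ∧ ∀ m, x ∉ CC K m) ∨
    (∃ m, x ∈ CC K m ∧ connectedComponent x = CC K m) := by
  rcases (mem_SS K).1 x.2 with h0 | ⟨m, h, hh, hp⟩ | ⟨m, n, c, hp⟩
  · -- origin : degenerate
    left
    refine ⟨?_, orig_not_mem_CC K x h0⟩
    apply Subset.antisymm
    · intro y hy
      have h1 : (y : EE).1 = 0 := by
        rw [comp_fst_const K x y hy, h0, orig_fst]
      have : (y : EE) = orig := by
        rcases (mem_SS K).1 y.2 with h | ⟨m, hq, hh, hp⟩ | ⟨m, n, c, hp⟩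
        · exact h
        · rw [hp, pt1_fst] at h1; exact absurd h1 (aa_pos m).ne'
        · rw [hp, pt2_fst] at h1; exact absurd h1 (aa_pos m).ne'
      have : y = x := Subtype.ext (by rw [this, h0])
      exact this ▸ rfl
    · rintro y rfl
      exact mem_connectedComponent
  · -- K-copy
    right
    refine ⟨m, pt1_mem_CC K hh x hp, ?_⟩
    apply Subset.antisymm
    · intro y hy
      have hx1 : (x : EE).1 = aa m := by rw [hp, pt1_fst]
      have h1 : (y : EE).1 = aa m := by rw [comp_fst_const K x y hy, hx1]
      have h2 : (y : EE).2.1 = 0 := by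
        rw [comp_snd_const K x m hx1 y hy, hp, pt1_snd]
      rcases (mem_SS K).1 y.2 with h | ⟨m', h', hh', hp'⟩ | ⟨m', n', c', hp'⟩
      · rw [h, orig_fst] at h1; exact absurd h1.symm (aa_pos m).ne'
      · have : m' = m := aa_inj (by rw [hp', pt1_fst] at h1; exact h1)
        subst this
        exact pt1_mem_CC K hh' y hp'
      · rw [hp', pt2_snd] at h2
        exact absurd h2 (mul_pos (aa_pos m') (aa_pos n')).ne'
    · exact (isConnected_CC K m).isPreconnected.subset_connectedComponent
        (pt1_mem_CC K hh x hp)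
  · -- Cantor point : degenerate
    left
    have hx1 : (x : EE).1 = aa m := by rw [hp, pt2_fst]
    have hx2 : (x : EE).2.1 = aa m * aa n := by rw [hp, pt2_snd]
    refine ⟨?_, fun m' => not_mem_CC_of_snd_ne K (by rw [hx2]; exact (mul_pos (aa_pos m) (aa_pos n)).ne') m'⟩
    have hstrat : ∀ z ∈ connectedComponent x, ∃ c', (z : EE) = pt2 K m n c' := by
      intro z hz
      have h1 : (z : EE).1 = aa m := by rw [comp_fst_const K x z hz, hx1]
      have h2 : (z : EE).2.1 = aa m * aa n := by rw [comp_snd_const K x m hx1 z hz, hx2]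
      rcases (mem_SS K).1 z.2 with h | ⟨m', h', hh', hp'⟩ | ⟨m', n', c', hp'⟩
      · rw [h, orig_fst] at h1; exact absurd h1.symm (aa_pos m).ne'
      · rw [hp', pt1_snd] at h2
        exact absurd h2.symm (mul_pos (aa_pos m) (aa_pos n)).ne'
      · have hm : m' = m := aa_inj (by rw [hp', pt2_fst] at h1; exact h1)
        subst hm
        have hn : n' = n := by
          rw [hp', pt2_snd] at h2
          exact aa_inj (mul_left_cancel₀ (aa_ne m') h2)
        subst hn
        exact ⟨c', hp'⟩
    apply Subset.antisymm
    · intro y hy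
      -- third coordinate is constant via total disconnectedness of the Cantor set
      have hscalar : (((m:ℝ)+1)*((n:ℝ)+1)) * (aa m * aa n) = 1 := by
        have h1 := aa_mul_cancel m
        have h2 := aa_mul_cancel n
        nlinarith [h1, h2]
      have hval : ∀ z ∈ connectedComponent x,
          ∃ c', (z : EE) = pt2 K m n c' ∧
            (((m:ℝ)+1)*((n:ℝ)+1)) • (z : EE).2.2.1 = ee c' := by
        intro z hz
        obtain ⟨c', hc'⟩ := hstrat z hz
        refine ⟨c', hc', ?_⟩
        rw [hc']
        show (((m:ℝ)+1)*((n:ℝ)+1)) • ((aa m * aa n) • ee c') = ee c'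
        rw [smul_smul, hscalar, one_smul]
      have h3 : (y : EE).2.2.1 = (x : EE).2.2.1 := by
        set g : XX K → Linf := fun z => (((m:ℝ)+1)*((n:ℝ)+1)) • (z : EE).2.2.1 with hg
        have hcont : Continuous g := by rw [hg]; exact (continuous_const : Continuous fun _ : XX K => (((m:ℝ)+1)*((n:ℝ)+1))).smul (continuous_subtype_val.snd.snd.fst : Continuous fun z : XX K => (z : EE).2.2.1)
        have himg : IsPreconnected (g '' connectedComponent x) :=
          isPreconnected_connectedComponent.image _ hcont.continuousOn
        have hsub : g '' connectedComponent x ⊆ range ee := by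
          rintro - ⟨z, hz, rfl⟩
          obtain ⟨c', -, hval'⟩ := hval z hz
          exact ⟨c', hval'.symm⟩
        have hss := ee_range_td _ hsub himg
        have heq : g y = g x := hss (mem_image_of_mem _ hy)
          (mem_image_of_mem _ mem_connectedComponent)
        have hne : (((m:ℝ)+1)*((n:ℝ)+1)) ≠ 0 := by positivity
        exact smul_cancel hne heq
      obtain ⟨c', hc'⟩ := hstrat y hy
      have hyx : (y : EE) = (x : EE) := by
        rw [hc', hp]
        rw [hc', hp] at h3
        simp only [pt2] at h3 ⊢
        exact Prod.ext rfl (Prod.ext rfl (Prod.ext h3 rfl))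
      have : y = x := Subtype.ext hyx
      exact this ▸ rfl
    · rintro y rfl
      exact mem_connectedComponent
/-! ### Part 5: corollaries of the classification -/

lemma phi_mem_CC (m : ℕ) (y : K) : phi K m y ∈ CC K m := ⟨kap K y, ⟨y, rfl⟩, rfl⟩

lemma comp_eq_CC {x : XX K} {m : ℕ} (hx : x ∈ CC K m) : connectedComponent x = CC K m := by
  rcases comp_class K x with ⟨-, h2⟩ | ⟨m', hm', hc⟩
  · exact absurd hx (h2 m)
  · obtain ⟨h, hh, hp⟩ := hx
    obtain ⟨h', hh', hp'⟩ := hm'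
    have heq : aa m' = aa m := by
      have h1 := hp'.symm.trans hp
      have h2 := congrArg Prod.fst h1
      simpa using h2
    have hmm : m' = m := aa_inj heq
    rw [hc, hmm]

lemma comp_singleton_of_not_CC {x : XX K} (hx : ∀ m, x ∉ CC K m) :
    connectedComponent x = {x} :=
  ((comp_class K x).resolve_right (fun ⟨m, hm, _⟩ => hx m hm)).1

lemma CC_nontrivial (m : ℕ) : (CC K m).Nontrivial := by
  obtain ⟨y₀, y₁, hy⟩ := exists_pair_ne K
  refine ⟨phi K m y₀, phi_mem_CC K m y₀, phi K m y₁, phi_mem_CC K m y₁, fun h => hy ?_⟩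
  have h4 : aa m • kap K y₀ = aa m • kap K y₁ :=
    congrArg (fun z : XX K => (z : EE).2.2.2) h
  exact kap_injective K (smul_cancel (aa_ne m) h4)

lemma exists_R : ∃ R : ℝ, 1 ≤ R ∧ ∀ h ∈ KK K, ‖h‖ ≤ R := by
  obtain ⟨C, hC⟩ := isBounded_iff_forall_norm_le.1 (isCompact_KK K).isBounded
  exact ⟨max C 1, le_max_right _ _, fun h hh => le_trans (hC h hh) (le_max_left _ _)⟩

/-! ### distance estimates -/

lemma dist_pt2_pt1_lt (m n : ℕ) (c : ℕ → Bool) (h : Linf) {ε : ℝ}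
    (h2 : aa n < ε) (h4 : dist (kk K n) h < ε) :
    dist (pt2 K m n c) (pt1 m h) < ε := by
  have hε : 0 < ε := lt_of_le_of_lt (aa_pos n).le h2
  have haman : aa m * aa n ≤ aa n := mul_le_of_le_one_left (aa_pos n).le (aa_le_one m)
  simp only [pt2, pt1, Prod.dist_eq]
  refine max_lt (by simpa [dist_self] using hε) (max_lt ?_ (max_lt ?_ ?_))
  · rw [dist_zero_right, Real.norm_eq_abs,
      abs_of_pos (mul_pos (aa_pos m) (aa_pos n))]
    exact lt_of_le_of_lt haman h2
  · rw [dist_zero_right, norm_smul, Real.norm_eq_abs,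
      abs_of_pos (mul_pos (aa_pos m) (aa_pos n))]
    calc aa m * aa n * ‖ee c‖ ≤ aa m * aa n * 1 := by
          have := ee_norm_le_one c
          nlinarith [mul_pos (aa_pos m) (aa_pos n)]
      _ = aa m * aa n := mul_one _
      _ ≤ aa n := haman
      _ < ε := h2
  · rw [dist_smul₀, Real.norm_eq_abs, abs_of_pos (aa_pos m)]
    calc aa m * dist (kk K n) h ≤ 1 * dist (kk K n) h := by
          nlinarith [aa_le_one m, dist_nonneg (x := kk K n) (y := h)]
      _ = dist (kk K n) h := one_mul _
      _ < ε := h4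

lemma dist_pt1_orig_lt (m : ℕ) (h : Linf) {R ε : ℝ} (hR1 : 1 ≤ R) (hhR : ‖h‖ ≤ R)
    (hm : aa m * R < ε) : dist (pt1 m h) orig < ε := by
  have hR0 : 0 < R := lt_of_lt_of_le one_pos hR1
  have hε : 0 < ε := lt_of_le_of_lt (mul_pos (aa_pos m) hR0).le hm
  simp only [pt1, orig, Prod.dist_eq]
  refine max_lt ?_ (max_lt (by simpa [dist_self] using hε) (max_lt (by simpa [dist_self] using hε) ?_))
  · rw [dist_zero_right, Real.norm_eq_abs, abs_of_pos (aa_pos m)]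
    calc aa m = aa m * 1 := (mul_one _).symm
      _ ≤ aa m * R := by nlinarith [aa_pos m]
      _ < ε := hm
  · rw [dist_zero_right, norm_smul, Real.norm_eq_abs, abs_of_pos (aa_pos m)]
    calc aa m * ‖h‖ ≤ aa m * R := by nlinarith [aa_pos m]
      _ < ε := hm

lemma dist_pt2_pt2_lt (m n : ℕ) (c c' : ℕ → Bool) {ε : ℝ} (hε : 0 < ε)
    (hcc : ‖ee c' - ee c‖ < ε) : dist (pt2 K m n c') (pt2 K m n c) < ε := by
  simp only [pt2, Prod.dist_eq]
  refine max_lt (by simpa [dist_self] using hε) (max_lt (by simpa [dist_self] using hε)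
    (max_lt ?_ (by simpa [dist_self] using hε)))
  rw [dist_eq_norm, ← smul_sub, norm_smul, Real.norm_eq_abs,
    abs_of_pos (mul_pos (aa_pos m) (aa_pos n))]
  calc aa m * aa n * ‖ee c' - ee c‖ ≤ 1 * ‖ee c' - ee c‖ := by
        have h1 : aa m * aa n ≤ 1 :=
          le_trans (mul_le_of_le_one_left (aa_pos n).le (aa_le_one m)) (aa_le_one n)
        nlinarith [norm_nonneg (ee c' - ee c)]
    _ = ‖ee c' - ee c‖ := one_mul _
    _ < ε := hcc

/-- diameter estimate for components -/
lemma diam_CC_le (m : ℕ) {R : ℝ} (hR1 : 1 ≤ R) (hR : ∀ h ∈ KK K, ‖h‖ ≤ R) :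
    Metric.diam (CC K m) ≤ aa m * (2 * R) := by
  have hR0 : 0 < R := lt_of_lt_of_le one_pos hR1
  have hb : (0:ℝ) ≤ aa m * (2 * R) := by nlinarith [aa_pos m]
  apply Metric.diam_le_of_forall_dist_le hb
  rintro x ⟨h, hh, hp⟩ y ⟨h', hh', hp'⟩
  rw [Subtype.dist_eq, hp, hp']
  simp only [pt1, Prod.dist_eq, dist_self]
  refine max_le hb (max_le hb (max_le hb ?_))
  rw [dist_smul₀, Real.norm_eq_abs, abs_of_pos (aa_pos m)]
  have hd : dist h h' ≤ 2 * R := by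
    rw [dist_eq_norm]
    calc ‖h - h'‖ ≤ ‖h‖ + ‖h'‖ := norm_sub_le _ _
      _ ≤ R + R := add_le_add (hR h hh) (hR h' hh')
      _ = 2 * R := by ring
  nlinarith [aa_pos m, dist_nonneg (x := h) (y := h')]

lemma pt2_not_mem_CC (m n : ℕ) (c : ℕ → Bool) (x : XX K) (hx : (x : EE) = pt2 K m n c) :
    ∀ m', x ∉ CC K m' :=
  fun m' => not_mem_CC_of_snd_ne K
    (by rw [hx, pt2_snd]; exact (mul_pos (aa_pos m) (aa_pos n)).ne') m'

/-! ### the main construction theorem -/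

theorem construction (K : Type) [MetricSpace K] [CompactSpace K] [ConnectedSpace K]
    [Nontrivial K] :
    ∃ (X : Type) (mX : MetricSpace X),
      letI := mX
      CompactSpace X ∧ Nonempty X ∧
      (∀ x : X, ¬ IsOpen ({x} : Set X)) ∧
      Dense {x : X | connectedComponent x = {x}} ∧
      (let N : Set (Set X) :=
        {C : Set X | (∃ x : X, C = connectedComponent x) ∧ C.Nontrivial}
       N.Countable ∧ N.Infinite ∧ (∀ C ∈ N, Nonempty (↥C ≃ₜ K)) ∧
        ∀ ε : ℝ, 0 < ε → {C ∈ N | ε ≤ Metric.diam C}.Finite) := by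
  classical
  obtain ⟨R, hR1, hR⟩ := exists_R K
  have hR0 : 0 < R := lt_of_lt_of_le one_pos hR1
  have y₀ : K := Classical.arbitrary K
  -- the space
  refine ⟨XX K, inferInstance, isCompact_iff_compactSpace.1 (isCompact_SS K),
    ⟨⟨orig, (mem_SS K).2 (Or.inl rfl)⟩⟩, ?_, ?_, ?_⟩
  · -- no isolated points
    intro x hopen
    obtain ⟨ε, hε, hball⟩ := Metric.isOpen_iff.1 hopen x rfl
    have : ∃ y : XX K, y ≠ x ∧ dist y x < ε := by
      rcases (mem_SS K).1 x.2 with h0 | ⟨m, h, hh, hp⟩ | ⟨m, n, c, hp⟩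
      · -- origin
        obtain ⟨m, hm⟩ := exists_aa_lt (div_pos hε hR0)
        have hm' : aa m * R < ε := by
          rw [lt_div_iff₀ hR0] at hm
          exact hm
        refine ⟨phi K m y₀, ?_, ?_⟩
        · intro hcon
          have := congrArg (fun z : XX K => (z : EE).1) hcon
          simp only [phi, h0] at this
          exact (aa_pos m).ne' this
        · rw [Subtype.dist_eq, h0]
          exact dist_pt1_orig_lt m (kap K y₀) hR1 (hR _ ⟨y₀, rfl⟩) hm'
      · -- K-copy point
        obtain ⟨y₁, rfl⟩ := hh
        obtain ⟨N, hN⟩ := exists_aa_lt hε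
        obtain ⟨n, hnN, hn⟩ := kk_approx K y₁ hε N
        refine ⟨⟨pt2 K m n (fun _ => false),
          (mem_SS K).2 (Or.inr (Or.inr ⟨m, n, _, rfl⟩))⟩, ?_, ?_⟩
        · intro hcon
          have := congrArg (fun z : XX K => (z : EE).2.1) hcon
          simp only [hp, pt2_snd, pt1_snd] at this
          exact (mul_pos (aa_pos m) (aa_pos n)).ne' this
        · rw [Subtype.dist_eq, hp]
          exact dist_pt2_pt1_lt K m n _ _ (lt_of_le_of_lt (aa_le_aa hnN) hN) hn
      · -- Cantor point
        obtain ⟨N, hN⟩ : ∃ N : ℕ, ((1:ℝ)/2)^N < ε := exists_pow_lt_of_lt_one hε (by norm_num)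
        refine ⟨⟨pt2 K m n (Function.update c N (!c N)),
          (mem_SS K).2 (Or.inr (Or.inr ⟨m, n, _, rfl⟩))⟩, ?_, ?_⟩
        · intro hcon
          have h3 := congrArg (fun z : XX K => (z : EE).2.2.1) hcon
          simp only [hp] at h3
          have : ee (Function.update c N (!c N)) = ee c :=
            smul_cancel (mul_pos (aa_pos m) (aa_pos n)).ne' h3
          exact ee_flip_ne c N this
        · rw [Subtype.dist_eq, hp]
          exact dist_pt2_pt2_lt K m n c _ hε
            (lt_of_le_of_lt (ee_flip_bound c N) hN)
    obtain ⟨y, hyx, hyd⟩ := this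
    exact hyx (hball (mem_ball.2 hyd))
  · -- density of degenerate components
    rw [Metric.dense_iff]
    intro x r hr
    rcases comp_class K x with ⟨h1, -⟩ | ⟨m, hm, -⟩
    · exact ⟨x, mem_ball_self hr, h1⟩
    · obtain ⟨h, ⟨y₁, rfl⟩, hp⟩ := hm
      obtain ⟨N, hN⟩ := exists_aa_lt hr
      obtain ⟨n, hnN, hn⟩ := kk_approx K y₁ hr N
      refine ⟨⟨pt2 K m n (fun _ => false),
        (mem_SS K).2 (Or.inr (Or.inr ⟨m, n, _, rfl⟩))⟩, ?_, ?_⟩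
      · rw [mem_ball, Subtype.dist_eq, hp]
        exact dist_pt2_pt1_lt K m n _ _ (lt_of_le_of_lt (aa_le_aa hnN) hN) hn
      · exact comp_singleton_of_not_CC K (pt2_not_mem_CC K m n _ _ rfl)
  · -- the nondegenerate components
    have hNN : {C : Set (XX K) | (∃ x : XX K, C = connectedComponent x) ∧ C.Nontrivial} =
        range (CC K) := by
      ext C
      constructor
      · rintro ⟨⟨x, rfl⟩, hnt⟩
        rcases comp_class K x with ⟨h1, -⟩ | ⟨m, -, hc⟩
        · rw [h1] at hnt
          obtain ⟨a, ha, b, hb, hab⟩ := hnt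
          rw [mem_singleton_iff] at ha hb
          exact absurd (ha.trans hb.symm) hab
        · exact ⟨m, hc.symm⟩
      · rintro ⟨m, rfl⟩
        exact ⟨⟨phi K m y₀, (comp_eq_CC K (phi_mem_CC K m y₀)).symm⟩, CC_nontrivial K m⟩
    have hCCinj : Function.Injective (CC K) := by
      intro m m' hmm
      have hx : phi K m y₀ ∈ CC K m' := hmm ▸ phi_mem_CC K m y₀
      obtain ⟨h', hh', hp'⟩ := hx
      have : aa m = aa m' := by
        have := congrArg Prod.fst hp'
        simpa [phi] using this
      exact aa_inj this
    refine ⟨?_, ?_, ?_, ?_⟩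
    · rw [hNN]; exact countable_range _
    · rw [hNN]; exact infinite_range_of_injective hCCinj
    · -- homeomorphic to K
      intro C hC
      rw [hNN] at hC
      obtain ⟨m, rfl⟩ := hC
      have hbij : Function.Bijective
          (fun y : K => (⟨phi K m y, phi_mem_CC K m y⟩ : ↥(CC K m))) := by
        constructor
        · intro y y' hyy
          have h4 : aa m • kap K y = aa m • kap K y' :=
            congrArg (fun z : ↥(CC K m) => ((z : XX K) : EE).2.2.2) hyy
          exact kap_injective K (smul_cancel (aa_ne m) h4)
        · rintro ⟨x, h, ⟨y, rfl⟩, hp⟩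
          exact ⟨y, Subtype.ext (Subtype.ext hp.symm)⟩
      have hcont : Continuous (fun y : K => (⟨phi K m y, phi_mem_CC K m y⟩ : ↥(CC K m))) :=
        (phi_continuous K m).subtype_mk _
      exact ⟨(Continuous.homeoOfEquivCompactToT2 (f := Equiv.ofBijective _ hbij) hcont).symm⟩
    · -- null sequence
      intro ε hε
      have hsub : {C ∈ {C : Set (XX K) | (∃ x : XX K, C = connectedComponent x) ∧ C.Nontrivial} |
          ε ≤ Metric.diam C} ⊆ (CC K) '' (Iio (⌈2*R/ε⌉₊)) := by
        rintro C ⟨hC, hdiam⟩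
        rw [hNN] at hC
        obtain ⟨m, rfl⟩ := hC
        refine ⟨m, ?_, rfl⟩
        rw [mem_Iio, Nat.lt_ceil]
        have hd := le_trans hdiam (diam_CC_le K m hR1 hR)
        rw [aa] at hd
        have hm1 : (0:ℝ) < (m:ℝ) + 1 := by positivity
        rw [div_mul_eq_mul_div, one_mul, le_div_iff₀ hm1] at hd
        have : (m:ℝ) + 1 ≤ 2 * R / ε := by
          rw [le_div_iff₀ hε]
          linarith [hd]
        have hcast : (m:ℝ) < 2 * R / ε := by linarith
        exact hcast
      exact Set.Finite.subset ((finite_Iio _).image _) hsub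

end Stmt10

end Stmt10Aux

/-- For every metrizable continuum `K` with more than one point there exists a compact
metric(izable) space `X` such that: `X` has no isolated points; the union of the
degenerate (singleton) connected components of `X` is dense; `X` has countably
infinitely many nondegenerate connected components, each homeomorphic to `K`; and the
nondegenerate components form a null sequence (for every `ε > 0` only finitely many of
them have diameter at least `ε`). That is, `X` is a tame cantoroid all of whose
nondegenerate components are copies of `K`. -/
theorem stmt_10 (K : Type) [TopologicalSpace K] [CompactSpace K] [ConnectedSpace K]
    [TopologicalSpace.MetrizableSpace K] [Nontrivial K] :
    ∃ (X : Type) (mX : MetricSpace X),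
      letI := mX
      CompactSpace X ∧ Nonempty X ∧
      (∀ x : X, ¬ IsOpen ({x} : Set X)) ∧
      Dense {x : X | connectedComponent x = {x}} ∧
      (let N : Set (Set X) :=
        {C : Set X | (∃ x : X, C = connectedComponent x) ∧ C.Nontrivial}
       N.Countable ∧ N.Infinite ∧ (∀ C ∈ N, Nonempty (↥C ≃ₜ K)) ∧
        ∀ ε : ℝ, 0 < ε → {C ∈ N | ε ≤ Metric.diam C}.Finite) := by
  letI : MetricSpace K := TopologicalSpace.metrizableSpaceMetric K
  exact Stmt10.construction K
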